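/- Let Γ be a regular Skorokhod Map for G = ∩_{i=1}^q {x : ⟨x, n_i⟩ ≥ 0} with Lipschitz constant K_1, let x ∈ ∂G, x ≠ 0, and I(x) = {i : ⟨n_i, x⟩ = 0}. Then the Skorokhod Map for G̃ = ∩_{i ∈ I(x)} {y : ⟨y, n_i⟩ ≥ 0} with direction data {(n_i, d_i), i ∈ I(x)} exists on bounded-variation paths and is Lipschitz continuous with the same constant K_1. -/

import Mathlib

open MeasureTheory Set

noncomputable section

/-- The cone d(x) of directions of constraint, restricted to an index set
s: normalized nonnegative combinations of the d_i, i ∈ s, whose constraint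
⟨x, n_i⟩ = 0 is active at x. -/
def dirConeOn {E : Type*} [NormedAddCommGroup E] [InnerProductSpace ℝ E]
    {ι : Type*} [Fintype ι] [DecidableEq ι] (s : Finset ι) (n d : ι → E)
    (x : E) : Set E :=
  {γ | ‖γ‖ = 1 ∧ ∃ α : ι → ℝ, (∀ i, 0 ≤ α i) ∧
    (∀ i, α i ≠ 0 → i ∈ s ∧ (inner ℝ x (n i) : ℝ) = 0) ∧ γ = ∑ i ∈ s, α i • d i}

/-- (φ, η) solves the Skorokhod Problem on [0,1] for ψ with respect to the
domain G and the direction cones dc (Definition 1 of the paper). -/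
def IsSPSol {E : Type*} [NormedAddCommGroup E] [InnerProductSpace ℝ E]
    [CompleteSpace E] (G : Set E) (dc : E → Set E) (ψ φ η : ℝ → E) : Prop :=
  φ 0 = ψ 0 ∧
  (∀ t ∈ Icc (0:ℝ) 1, φ t = ψ t + η t) ∧
  (∀ t ∈ Icc (0:ℝ) 1, φ t ∈ G) ∧
  eVariationOn η (Icc (0:ℝ) 1) ≠ ⊤ ∧
  ∃ γ : ℝ → E, ∃ μ : Measure ℝ,
    (∀ t ∈ Icc (0:ℝ) 1, μ (Icc 0 t) = eVariationOn η (Icc 0 t)) ∧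
    μ (Icc (0:ℝ) 1)ᶜ = 0 ∧
    μ {t ∈ Icc (0:ℝ) 1 | φ t ∉ frontier G} = 0 ∧
    (∀ᵐ t ∂μ, γ t ∈ dc (φ t)) ∧
    (∀ t ∈ Icc (0:ℝ) 1, η t = ∫ s in Icc 0 t, γ s ∂μ)

/-- Existence of Skorokhod Problem solutions for all bounded-variation
inputs starting in G. -/
def SPExists {E : Type*} [NormedAddCommGroup E] [InnerProductSpace ℝ E]
    [CompleteSpace E] (G : Set E) (dc : E → Set E) : Prop :=
  ∀ ψ : ℝ → E, eVariationOn ψ (Icc (0:ℝ) 1) ≠ ⊤ → ψ 0 ∈ G →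
    ∃ φ η, IsSPSol G dc ψ φ η

/-- Lipschitz continuity (with constant K1, in sup norm) of the Skorokhod
Map on paths of bounded variation. -/
def SPLipschitz {E : Type*} [NormedAddCommGroup E] [InnerProductSpace ℝ E]
    [CompleteSpace E] (G : Set E) (dc : E → Set E) (K1 : ℝ) : Prop :=
  ∀ ψ₁ φ₁ η₁ ψ₂ φ₂ η₂ : ℝ → E,
    eVariationOn ψ₁ (Icc (0:ℝ) 1) ≠ ⊤ → eVariationOn ψ₂ (Icc (0:ℝ) 1) ≠ ⊤ →
    IsSPSol G dc ψ₁ φ₁ η₁ → IsSPSol G dc ψ₂ φ₂ η₂ →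
    ∀ t ∈ Icc (0:ℝ) 1, ‖φ₁ t - φ₂ t‖ ≤ K1 * ⨆ s ∈ Icc (0:ℝ) 1, ‖ψ₁ s - ψ₂ s‖

section skorokhodHelpers
variable {E : Type*} [NormedAddCommGroup E] [InnerProductSpace ℝ E]

omit [InnerProductSpace ℝ E] in
lemma evar_add_const (f : ℝ → E) (c : E) (s : Set ℝ) :
    eVariationOn (fun t => f t + c) s = eVariationOn f s := by
  simp only [eVariationOn]
  apply iSup_congr
  intro p
  apply Finset.sum_congr rfl
  intro i _
  rw [edist_add_right]

omit [InnerProductSpace ℝ E] in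
lemma evar_const (c : E) (s : Set ℝ) : eVariationOn (fun _ : ℝ => c) s = 0 := by
  apply eVariationOn.constant_on
  apply Set.subsingleton_of_subset_singleton
  rintro y ⟨t, _, rfl⟩
  rfl

lemma mem_frontier_of_active {ι : Type*} (s : Finset ι) (n : ι → E) (y : E)
    (hy : ∀ j ∈ s, 0 ≤ (inner ℝ y (n j) : ℝ))
    (i : ι) (his : i ∈ s) (hni : n i ≠ 0) (hyi : (inner ℝ y (n i) : ℝ) = 0) :
    y ∈ frontier {z : E | ∀ j ∈ s, 0 ≤ (inner ℝ z (n j) : ℝ)} := by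
  rw [frontier, Set.mem_diff]
  refine ⟨subset_closure hy, fun hmem => ?_⟩
  obtain ⟨ε, hε, hball⟩ := Metric.mem_nhds_iff.mp (mem_interior_iff_mem_nhds.mp hmem)
  have hn : (0:ℝ) < ‖n i‖ := norm_pos_iff.mpr hni
  set r : ℝ := ε / (2 * ‖n i‖) with hr
  have hrpos : 0 < r := by positivity
  have hz : y - r • n i ∈ Metric.ball y ε := by
    rw [Metric.mem_ball, dist_eq_norm]
    have : y - r • n i - y = -(r • n i) := by abel
    rw [this, norm_neg, norm_smul, Real.norm_eq_abs, abs_of_pos hrpos]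
    have : r * ‖n i‖ = ε / 2 := by rw [hr]; field_simp
    rw [this]; linarith
  have hmem2 := hball hz i his
  rw [inner_sub_left, real_inner_smul_left, real_inner_self_eq_norm_sq, hyi] at hmem2
  nlinarith [mul_pos hrpos (pow_pos hn 2)]

lemma frontier_active {ι : Type*} (s : Finset ι) (n : ι → E) (y : E)
    (hy : y ∈ frontier {z : E | ∀ j ∈ s, 0 ≤ (inner ℝ z (n j) : ℝ)}) :
    (∀ j ∈ s, 0 ≤ (inner ℝ y (n j) : ℝ)) ∧
      ∃ i ∈ s, n i ≠ 0 ∧ (inner ℝ y (n i) : ℝ) = 0 := by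
  have hcont : ∀ j : ι, Continuous fun z : E => (inner ℝ z (n j) : ℝ) :=
    fun j => continuous_id.inner continuous_const
  have hclosed : IsClosed {z : E | ∀ j ∈ s, 0 ≤ (inner ℝ z (n j) : ℝ)} := by
    have : {z : E | ∀ j ∈ s, 0 ≤ (inner ℝ z (n j) : ℝ)} =
        ⋂ j ∈ s, {z : E | 0 ≤ (inner ℝ z (n j) : ℝ)} := by
      ext z; simp
    rw [this]
    exact isClosed_biInter fun j _ => isClosed_le continuous_const (hcont j)
  rw [hclosed.frontier_eq, Set.mem_diff] at hy
  refine ⟨hy.1, ?_⟩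
  by_contra hcon
  push_neg at hcon
  apply hy.2
  have hU : IsOpen {z : E | ∀ j ∈ s, n j ≠ 0 → 0 < (inner ℝ z (n j) : ℝ)} := by
    have : {z : E | ∀ j ∈ s, n j ≠ 0 → 0 < (inner ℝ z (n j) : ℝ)} =
        ⋂ j ∈ s, {z : E | n j ≠ 0 → 0 < (inner ℝ z (n j) : ℝ)} := by
      ext z; simp
    rw [this]
    apply isOpen_biInter_finset
    intro j _
    by_cases hj : n j = 0
    · simp [hj]
    · have : {z : E | n j ≠ 0 → 0 < (inner ℝ z (n j) : ℝ)} =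
          {z : E | 0 < (inner ℝ z (n j) : ℝ)} := by
        ext z; simp [hj]
      rw [this]
      exact isOpen_lt continuous_const (hcont j)
  have hUsub : {z : E | ∀ j ∈ s, n j ≠ 0 → 0 < (inner ℝ z (n j) : ℝ)} ⊆
      {z : E | ∀ j ∈ s, 0 ≤ (inner ℝ z (n j) : ℝ)} := by
    intro z hz j hj
    by_cases hnj : n j = 0
    · simp [hnj, inner_zero_right]
    · exact (hz j hj hnj).le
  apply interior_maximal hUsub hU
  intro j hj hnj
  exact lt_of_le_of_ne (hy.1 j hj) (Ne.symm (hcon j hj hnj))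

omit [InnerProductSpace ℝ E] in
lemma norm_sub_le_evar (f : ℝ → E) (hf : eVariationOn f (Icc 0 1) ≠ ⊤)
    {t : ℝ} (ht : t ∈ Icc (0:ℝ) 1) :
    ‖f t - f 0‖ ≤ (eVariationOn f (Icc 0 1)).toReal := by
  have h0 : (0:ℝ) ∈ Icc (0:ℝ) 1 := by norm_num
  have h := eVariationOn.edist_le f ht h0
  have h2 := ENNReal.toReal_mono hf h
  rwa [← dist_edist, dist_eq_norm] at h2

omit [NormedAddCommGroup E] [InnerProductSpace ℝ E] in
lemma sum_div_bound {ι : Type*} (s : Finset ι) (g h : ι → ℝ)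
    (hg : ∀ i ∈ s, 0 ≤ g i) (hh : ∀ i ∈ s, 0 < h i) (i : ι) (hi : i ∈ s) :
    g i ≤ (∑ j ∈ s, g j / h j) * h i := by
  have hterm : g i / h i ≤ ∑ j ∈ s, g j / h j :=
    Finset.single_le_sum (fun j hj => div_nonneg (hg j hj) (hh j hj).le) hi
  calc g i = (g i / h i) * h i := (div_mul_cancel₀ _ (hh i hi).ne').symm
    _ ≤ _ := mul_le_mul_of_nonneg_right hterm (hh i hi).le

lemma real_inner_ge_neg (u v : E) : -(‖u‖ * ‖v‖) ≤ (inner ℝ u v : ℝ) :=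
  (abs_le.mp (abs_real_inner_le_norm u v)).1

variable [CompleteSpace E] {ι : Type*} [Fintype ι] [DecidableEq ι]

omit [CompleteSpace E] [DecidableEq ι] in
lemma setEqUniv (n : ι → E) : {y : E | ∀ i, 0 ≤ (inner ℝ y (n i) : ℝ)} =
    {y : E | ∀ i ∈ (Finset.univ : Finset ι), 0 ≤ (inner ℝ y (n i) : ℝ)} := by
  ext y; simp

lemma pushUp (n d : ι → E) (x : E) (Ix : Finset ι)
    (hzero : ∀ i ∈ Ix, (inner ℝ x (n i) : ℝ) = 0)
    (a : ℝ) (ψ φ η : ℝ → E)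
    (hsol : IsSPSol {y : E | ∀ i ∈ Ix, 0 ≤ (inner ℝ y (n i) : ℝ)} (dirConeOn Ix n d) ψ φ η)
    (hb : ∀ t ∈ Icc (0:ℝ) 1, ∀ i ∉ Ix, 0 ≤ (inner ℝ (φ t + a • x) (n i) : ℝ)) :
    IsSPSol {y : E | ∀ i, 0 ≤ (inner ℝ y (n i) : ℝ)} (dirConeOn Finset.univ n d)
      (fun t => ψ t + a • x) (fun t => φ t + a • x) η := by
  have htr : ∀ (y : E), ∀ i ∈ Ix, (inner ℝ (y + a • x) (n i) : ℝ) = inner ℝ y (n i) := by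
    intro y i hi
    rw [inner_add_left, real_inner_smul_left, hzero i hi, mul_zero, add_zero]
  obtain ⟨h0, hadd, hmem, hvar, γ, μ, hμvar, hμc, hμfr, hγ, hint⟩ := hsol
  have hmemG : ∀ t ∈ Icc (0:ℝ) 1, ∀ i, 0 ≤ (inner ℝ (φ t + a • x) (n i) : ℝ) := by
    intro t ht i
    by_cases hi : i ∈ Ix
    · rw [htr _ i hi]; exact hmem t ht i hi
    · exact hb t ht i hi
  refine ⟨show φ 0 + a • x = ψ 0 + a • x by rw [h0],
    fun t ht => show φ t + a • x = (ψ t + a • x) + η t by rw [hadd t ht]; abel, hmemG, hvar,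
    γ, μ, hμvar, hμc, ?_, ?_, hint⟩
  · apply measure_mono_null _ hμfr
    intro t ht
    obtain ⟨ht1, ht2⟩ := ht
    refine ⟨ht1, fun hfr => ht2 ?_⟩
    obtain ⟨hmemt, i, hiIx, hni, hzi⟩ := frontier_active Ix n (φ t) hfr
    rw [setEqUniv n]
    exact mem_frontier_of_active _ n _ (fun j _ => hmemG t ht1 j) i (Finset.mem_univ i) hni
      (by rw [htr _ i hiIx]; exact hzi)
  · filter_upwards [hγ] with t hγt
    obtain ⟨hn1, α, hα0, hαcond, hsum⟩ := hγt
    refine ⟨hn1, α, hα0, fun i hi => ⟨Finset.mem_univ i,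
      by rw [htr _ i (hαcond i hi).1]; exact (hαcond i hi).2⟩, ?_⟩
    rw [hsum]
    exact Finset.sum_subset (Finset.subset_univ Ix) fun j _ hj => by
      rw [show α j = 0 by by_contra h; exact hj (hαcond j h).1, zero_smul]

lemma pullDown (n d : ι → E) (x : E) (Ix : Finset ι)
    (hzero : ∀ i ∈ Ix, (inner ℝ x (n i) : ℝ) = 0)
    (a : ℝ) (ψ φ η : ℝ → E)
    (hsol : IsSPSol {y : E | ∀ i, 0 ≤ (inner ℝ y (n i) : ℝ)} (dirConeOn Finset.univ n d)
      (fun t => ψ t + a • x) φ η)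
    (hb : ∀ t ∈ Icc (0:ℝ) 1, ∀ i ∉ Ix, 0 < (inner ℝ (φ t) (n i) : ℝ)) :
    IsSPSol {y : E | ∀ i ∈ Ix, 0 ≤ (inner ℝ y (n i) : ℝ)} (dirConeOn Ix n d)
      ψ (fun t => φ t - a • x) η := by
  have htr : ∀ (y : E), ∀ i ∈ Ix, (inner ℝ (y - a • x) (n i) : ℝ) = inner ℝ y (n i) := by
    intro y i hi
    rw [inner_sub_left, real_inner_smul_left, hzero i hi, mul_zero, sub_zero]
  obtain ⟨h0, hadd, hmem, hvar, γ, μ, hμvar, hμc, hμfr, hγ, hint⟩ := hsol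
  have hmemGt : ∀ t ∈ Icc (0:ℝ) 1, ∀ i ∈ Ix, 0 ≤ (inner ℝ (φ t - a • x) (n i) : ℝ) := by
    intro t ht i hi
    rw [htr _ i hi]; exact hmem t ht i
  have h0' : φ 0 = ψ 0 + a • x := h0
  have hadd' : ∀ t ∈ Icc (0:ℝ) 1, φ t = (ψ t + a • x) + η t := by
    intro t ht; rw [hadd t ht]
  refine ⟨show φ 0 - a • x = ψ 0 by simp [h0'],
    fun t ht => show φ t - a • x = ψ t + η t by rw [hadd' t ht]; abel, hmemGt, hvar, γ, μ, hμvar,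
    hμc, ?_, ?_, hint⟩
  · apply measure_mono_null _ hμfr
    intro t ht
    obtain ⟨ht1, ht2⟩ := ht
    refine ⟨ht1, fun hfr => ht2 ?_⟩
    rw [setEqUniv n] at hfr
    obtain ⟨hmemt, i, _, hni, hzi⟩ := frontier_active Finset.univ n (φ t) hfr
    have hiIx : i ∈ Ix := by
      by_contra hiIx
      exact absurd hzi (ne_of_gt (hb t ht1 i hiIx))
    exact mem_frontier_of_active Ix n _ (hmemGt t ht1) i hiIx hni
      (by rw [htr _ i hiIx]; exact hzi)
  · have hIcc : ∀ᵐ t ∂μ, t ∈ Icc (0:ℝ) 1 := by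
      rw [MeasureTheory.ae_iff]
      apply measure_mono_null _ hμc
      intro t ht
      exact ht
    filter_upwards [hγ, hIcc] with t hγt htI
    obtain ⟨hn1, α, hα0, hαcond, hsum⟩ := hγt
    have hsupp : ∀ i, α i ≠ 0 → i ∈ Ix := by
      intro i hi
      by_contra hiIx
      exact absurd (hαcond i hi).2 (ne_of_gt (hb t htI i hiIx))
    refine ⟨hn1, α, hα0, fun i hi => ⟨hsupp i hi,
      by rw [htr _ i (hsupp i hi)]; exact (hαcond i hi).2⟩, ?_⟩
    rw [hsum]
    exact (Finset.sum_subset (Finset.subset_univ Ix) fun j _ hj => by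
      rw [show α j = 0 by by_contra h; exact hj (hsupp j h), zero_smul]).symm

end skorokhodHelpers

/-- Lemma 2: localization of regularity.  If the Skorokhod
Map for G = ∩_{i=1}^q {⟨·, n_i⟩ ≥ 0} with data {(n_i, d_i)} exists on
bounded-variation paths and is Lipschitz with constant K1, and x ∈ ∂G,
x ≠ 0, with active set I(x) = {i : ⟨n_i, x⟩ = 0}, then the Skorokhod Map for
G̃ = ∩_{i ∈ I(x)} {⟨·, n_i⟩ ≥ 0} with data {(n_i, d_i), i ∈ I(x)} also
exists on bounded-variation paths and is Lipschitz with the same constant K1. -/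
theorem skorokhod_localization {N q : ℕ}
    (n d : Fin q → EuclideanSpace ℝ (Fin N))
    (hnd : ∀ i, 0 < (inner ℝ (n i) (d i) : ℝ))
    (K1 : ℝ)
    (x : EuclideanSpace ℝ (Fin N)) (hx0 : x ≠ 0)
    (hxG : x ∈ frontier {y : EuclideanSpace ℝ (Fin N) | ∀ i, 0 ≤ (inner ℝ y (n i) : ℝ)})
    (Ix : Finset (Fin q)) (hIx : ∀ i, i ∈ Ix ↔ (inner ℝ (n i) x : ℝ) = 0)
    (hEx : SPExists {y : EuclideanSpace ℝ (Fin N) | ∀ i, 0 ≤ (inner ℝ y (n i) : ℝ)}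
        (dirConeOn Finset.univ n d))
    (hLip : SPLipschitz {y : EuclideanSpace ℝ (Fin N) | ∀ i, 0 ≤ (inner ℝ y (n i) : ℝ)}
        (dirConeOn Finset.univ n d) K1) :
    SPExists {y : EuclideanSpace ℝ (Fin N) | ∀ i ∈ Ix, 0 ≤ (inner ℝ y (n i) : ℝ)}
        (dirConeOn Ix n d) ∧
    SPLipschitz {y : EuclideanSpace ℝ (Fin N) | ∀ i ∈ Ix, 0 ≤ (inner ℝ y (n i) : ℝ)}
        (dirConeOn Ix n d) K1 := by
  classical
  have hzero : ∀ i ∈ Ix, (inner ℝ x (n i) : ℝ) = 0 := fun i hi => by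
    rw [real_inner_comm]; exact (hIx i).mp hi
  rw [setEqUniv n] at hxG
  have hxmem : ∀ i, 0 ≤ (inner ℝ x (n i) : ℝ) := fun i =>
    (frontier_active Finset.univ n x hxG).1 i (Finset.mem_univ i)
  have hxpos : ∀ i ∉ Ix, 0 < (inner ℝ x (n i) : ℝ) := by
    intro i hi
    have hne : (inner ℝ x (n i) : ℝ) ≠ 0 := fun h =>
      hi ((hIx i).mpr (by rw [real_inner_comm]; exact h))
    exact lt_of_le_of_ne (hxmem i) (Ne.symm hne)
  constructor
  · -- Existence
    intro ψt hψvar hψ0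
    set V : ℝ := (eVariationOn ψt (Icc (0:ℝ) 1)).toReal with hV
    have hV0 : 0 ≤ V := ENNReal.toReal_nonneg
    set M : ℝ := ‖ψt 0‖ + max K1 0 * V with hM
    have hM0 : 0 ≤ M := by
      have : 0 ≤ max K1 0 * V := mul_nonneg (le_max_right _ _) hV0
      have := norm_nonneg (ψt 0)
      rw [hM]; linarith
    set a : ℝ := ∑ j ∈ Ixᶜ, (M * ‖n j‖ + 1) / (inner ℝ x (n j) : ℝ) with ha
    have hkey : ∀ i ∉ Ix, M * ‖n i‖ + 1 ≤ a * (inner ℝ x (n i) : ℝ) := by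
      intro i hi
      exact sum_div_bound Ixᶜ (fun j => M * ‖n j‖ + 1) (fun j => (inner ℝ x (n j) : ℝ))
        (fun j _ => by positivity) (fun j hj => hxpos j (Finset.mem_compl.mp hj))
        i (Finset.mem_compl.mpr hi)
    have hψBV : eVariationOn (fun t => ψt t + a • x) (Icc (0:ℝ) 1) ≠ ⊤ := by
      rw [evar_add_const]; exact hψvar
    have hinner0 : ∀ (y : EuclideanSpace ℝ (Fin N)) (i : Fin q),
        (inner ℝ (y + a • x) (n i) : ℝ) = inner ℝ y (n i) + a * inner ℝ x (n i) := by
      intro y i; rw [inner_add_left, real_inner_smul_left]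
    have hψ0G : ψt 0 + a • x ∈
        {y : EuclideanSpace ℝ (Fin N) | ∀ i, 0 ≤ (inner ℝ y (n i) : ℝ)} := by
      intro i
      rw [hinner0]
      by_cases hi : i ∈ Ix
      · rw [hzero i hi, mul_zero, add_zero]; exact hψ0 i hi
      · have h1 := hkey i hi
        have h2 := real_inner_ge_neg (ψt 0) (n i)
        have h3 : ‖ψt 0‖ * ‖n i‖ ≤ M * ‖n i‖ := by
          apply mul_le_mul_of_nonneg_right _ (norm_nonneg _)
          rw [hM]
          have : 0 ≤ max K1 0 * V := mul_nonneg (le_max_right _ _) hV0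
          linarith
        linarith
    obtain ⟨φ, η, hsol⟩ := hEx (fun t => ψt t + a • x) hψBV hψ0G
    -- the constant path solution
    have hconst : IsSPSol {y : EuclideanSpace ℝ (Fin N) | ∀ i, 0 ≤ (inner ℝ y (n i) : ℝ)}
        (dirConeOn Finset.univ n d) (fun _ => ψt 0 + a • x) (fun _ => ψt 0 + a • x)
        (fun _ => 0) := by
      refine ⟨rfl, fun t _ => by simp, fun t _ => hψ0G, by rw [evar_const]; exact ENNReal.zero_ne_top,
        fun _ => 0, 0, fun t _ => by simp [evar_const], by simp, by simp, by simp, fun t _ => by simp⟩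
    have hconstBV : eVariationOn (fun _ : ℝ => ψt 0 + a • x) (Icc (0:ℝ) 1) ≠ ⊤ := by
      rw [evar_const]; exact ENNReal.zero_ne_top
    have hbound := hLip (fun t => ψt t + a • x) φ η (fun _ => ψt 0 + a • x)
      (fun _ => ψt 0 + a • x) (fun _ => 0) hψBV hconstBV hsol hconst
    have hS0 : (0:ℝ) ≤ ⨆ s ∈ Icc (0:ℝ) 1, ‖(ψt s + a • x) - (ψt 0 + a • x)‖ :=
      Real.iSup_nonneg fun s => Real.iSup_nonneg fun _ => norm_nonneg _
    have hS : (⨆ s ∈ Icc (0:ℝ) 1, ‖(ψt s + a • x) - (ψt 0 + a • x)‖) ≤ V := by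
      apply Real.iSup_le _ hV0
      intro s
      apply Real.iSup_le _ hV0
      intro hs
      have heq : (ψt s + a • x) - (ψt 0 + a • x) = ψt s - ψt 0 := by abel
      rw [heq]
      exact norm_sub_le_evar ψt hψvar hs
    have hφbound : ∀ t ∈ Icc (0:ℝ) 1, ‖φ t - (ψt 0 + a • x)‖ ≤ max K1 0 * V := by
      intro t ht
      have h1 := hbound t ht
      calc ‖φ t - (ψt 0 + a • x)‖
          ≤ K1 * ⨆ s ∈ Icc (0:ℝ) 1, ‖(ψt s + a • x) - (ψt 0 + a • x)‖ := h1
        _ ≤ max K1 0 * ⨆ s ∈ Icc (0:ℝ) 1, ‖(ψt s + a • x) - (ψt 0 + a • x)‖ :=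
            mul_le_mul_of_nonneg_right (le_max_left _ _) hS0
        _ ≤ max K1 0 * V := mul_le_mul_of_nonneg_left hS (le_max_right _ _)
    have hb : ∀ t ∈ Icc (0:ℝ) 1, ∀ i ∉ Ix, 0 < (inner ℝ (φ t) (n i) : ℝ) := by
      intro t ht i hi
      have hdecomp : (inner ℝ (φ t) (n i) : ℝ) =
          inner ℝ (ψt 0 + a • x) (n i) + inner ℝ (φ t - (ψt 0 + a • x)) (n i) := by
        rw [← inner_add_left]
        congr 1
        abel
      have h1 := hkey i hi
      have h2 := real_inner_ge_neg (ψt 0) (n i)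
      have h3 := real_inner_ge_neg (φ t - (ψt 0 + a • x)) (n i)
      have h4 : ‖φ t - (ψt 0 + a • x)‖ * ‖n i‖ ≤ max K1 0 * V * ‖n i‖ :=
        mul_le_mul_of_nonneg_right (hφbound t ht) (norm_nonneg _)
      have h5 : ‖ψt 0‖ * ‖n i‖ + max K1 0 * V * ‖n i‖ = M * ‖n i‖ := by
        rw [hM]; ring
      rw [hdecomp, hinner0]
      linarith
    exact ⟨_, η, pullDown n d x Ix hzero a ψt φ η hsol hb⟩
  · -- Lipschitz
    intro ψt1 φt1 ηt1 ψt2 φt2 ηt2 hv1 hv2 hsol1 hsol2 t ht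
    have h0Icc : (0:ℝ) ∈ Icc (0:ℝ) 1 := by norm_num
    have hφb : ∀ (ψt φt ηt : ℝ → EuclideanSpace ℝ (Fin N)),
        eVariationOn ψt (Icc (0:ℝ) 1) ≠ ⊤ →
        IsSPSol {y : EuclideanSpace ℝ (Fin N) | ∀ i ∈ Ix, 0 ≤ (inner ℝ y (n i) : ℝ)}
          (dirConeOn Ix n d) ψt φt ηt →
        ∀ s ∈ Icc (0:ℝ) 1, ‖φt s‖ ≤ ‖ψt 0‖ + (eVariationOn ψt (Icc (0:ℝ) 1)).toReal +
          (eVariationOn ηt (Icc (0:ℝ) 1)).toReal := by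
      intro ψt φt ηt hv hsol s hs
      obtain ⟨h0, hadd, _, hvar, _⟩ := hsol
      have hη0 : ηt 0 = 0 := by
        have h := hadd 0 h0Icc
        rw [h0] at h
        exact (left_eq_add.mp h)
      have hrw : φt s = ψt 0 + ((ψt s - ψt 0) + (ηt s - ηt 0)) := by
        rw [hadd s hs, hη0]; abel
      calc ‖φt s‖ = ‖ψt 0 + ((ψt s - ψt 0) + (ηt s - ηt 0))‖ := by rw [hrw]
        _ ≤ ‖ψt 0‖ + ‖(ψt s - ψt 0) + (ηt s - ηt 0)‖ := norm_add_le _ _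
        _ ≤ ‖ψt 0‖ + (‖ψt s - ψt 0‖ + ‖ηt s - ηt 0‖) := by
            have := norm_add_le (ψt s - ψt 0) (ηt s - ηt 0)
            linarith
        _ ≤ _ := by
            have hb1 := norm_sub_le_evar ψt hv hs
            have hb2 := norm_sub_le_evar ηt hvar hs
            linarith
    set M1 : ℝ := ‖ψt1 0‖ + (eVariationOn ψt1 (Icc (0:ℝ) 1)).toReal +
      (eVariationOn ηt1 (Icc (0:ℝ) 1)).toReal with hM1
    set M2 : ℝ := ‖ψt2 0‖ + (eVariationOn ψt2 (Icc (0:ℝ) 1)).toReal +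
      (eVariationOn ηt2 (Icc (0:ℝ) 1)).toReal with hM2
    have hM10 : 0 ≤ M1 := by
      rw [hM1]; positivity
    have hM20 : 0 ≤ M2 := by
      rw [hM2]; positivity
    set a : ℝ := ∑ j ∈ Ixᶜ, ((M1 + M2) * ‖n j‖) / (inner ℝ x (n j) : ℝ) with ha
    have hkey : ∀ i ∉ Ix, (M1 + M2) * ‖n i‖ ≤ a * (inner ℝ x (n i) : ℝ) := by
      intro i hi
      exact sum_div_bound Ixᶜ (fun j => (M1 + M2) * ‖n j‖) (fun j => (inner ℝ x (n j) : ℝ))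
        (fun j _ => mul_nonneg (by linarith) (norm_nonneg _))
        (fun j hj => hxpos j (Finset.mem_compl.mp hj)) i (Finset.mem_compl.mpr hi)
    have hbgen : ∀ (ψt φt ηt : ℝ → EuclideanSpace ℝ (Fin N)) (Mo : ℝ),
        (∀ s ∈ Icc (0:ℝ) 1, ‖φt s‖ ≤ Mo) → Mo ≤ M1 + M2 →
        ∀ s ∈ Icc (0:ℝ) 1, ∀ i ∉ Ix, 0 ≤ (inner ℝ (φt s + a • x) (n i) : ℝ) := by
      intro ψt φt ηt Mo hMo hMole s hs i hi
      rw [inner_add_left, real_inner_smul_left]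
      have h1 := hkey i hi
      have h2 := real_inner_ge_neg (φt s) (n i)
      have h3 : ‖φt s‖ * ‖n i‖ ≤ (M1 + M2) * ‖n i‖ :=
        mul_le_mul_of_nonneg_right (le_trans (hMo s hs) hMole) (norm_nonneg _)
      linarith
    have hb1 := hbgen ψt1 φt1 ηt1 M1 (hφb ψt1 φt1 ηt1 hv1 hsol1) (by linarith)
    have hb2 := hbgen ψt2 φt2 ηt2 M2 (hφb ψt2 φt2 ηt2 hv2 hsol2) (by linarith)
    have hup1 := pushUp n d x Ix hzero a ψt1 φt1 ηt1 hsol1 hb1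
    have hup2 := pushUp n d x Ix hzero a ψt2 φt2 ηt2 hsol2 hb2
    have hbv1 : eVariationOn (fun t => ψt1 t + a • x) (Icc (0:ℝ) 1) ≠ ⊤ := by
      rw [evar_add_const]; exact hv1
    have hbv2 : eVariationOn (fun t => ψt2 t + a • x) (Icc (0:ℝ) 1) ≠ ⊤ := by
      rw [evar_add_const]; exact hv2
    have hfin := hLip _ _ _ _ _ _ hbv1 hbv2 hup1 hup2 t ht
    simp only [add_sub_add_right_eq_sub] at hfin
    exact hfin


end
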